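/- Fix x ∈ W of positive level and ν ∈ Φ_fin. Then the set of corners of the lower graph Γ_{x,ν} is finite; that is, there are only finitely many positive double affine roots α with fin(α) = ν and x^{−1}(α) < 0 that are corners of Γ_{x,ν}. -/
import Mathlib


/-!
Common framework for the double affine Weyl semigroup of Welch,
"Double Affine Bruhat Order".

Encoding conventions:
* `P` is the finite weight lattice `P_fin` (an additive abelian group) equipped with
  an integer-valued pairing `pair` (the normalized simply-laced pairing, identifying
  roots and coroots).
* A finite root is an element of the set `Φfin ⊆ P`; `finPos` is the set of
  positive finite roots.
* An affine root `ν + rδ` is encoded as the pair `(ν, r) : P × ℤ`.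
* An affine weight `ζ = μ + mδ + lΛ₀ ∈ X` is encoded as `(μ, m, l) : P × ℤ × ℤ`.
* A double affine root `ν + rδ + jπ` is encoded as `(ν, r, j) : P × ℤ × ℤ`.
* `G` is the affine Weyl group `W_aff` (an abstract group), acting on affine
  roots via `ract` and on `X` via `xact`; `saff α̃` is the reflection `s_{α̃}`,
  `Ytr λ` is the translation `Y^λ`.
* An element `X^ζ w̃` of the group `X ⋊ W_aff` (in particular of the double affine
  Weyl semigroup `W`, whose elements are those with `ζ` in the Tits cone) is encoded
  as the pair `(ζ, w̃) : (P × ℤ × ℤ) × G`.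
-/

namespace DoubleAffineBruhat

/-- Positivity of an affine root `ν + rδ`, encoded as the pair `(ν, r)`:
`ν + rδ > 0` iff `r > 0`, or `r = 0` and `ν` is a positive finite root. -/
def aPos {P : Type} (finPos : Set P) (a : P × ℤ) : Prop :=
  0 < a.2 ∨ (a.2 = 0 ∧ a.1 ∈ finPos)

/-- The pairing of an affine weight `ζ = μ + mδ + lΛ₀`, encoded as `(μ, m, l)`,
with an affine root `ν + rδ`, encoded as `(ν, r)`:
`⟨ζ, ν + rδ⟩ = ⟨μ, ν⟩ + l·r`. -/
def xpair {P : Type} (pair : P → P → ℤ) (ζ : P × ℤ × ℤ) (a : P × ℤ) : ℤ :=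
  pair ζ.1 a.1 + ζ.2.2 * a.2

/-- The level of an affine weight. -/
def level {P : Type} (ζ : P × ℤ × ℤ) : ℤ := ζ.2.2

/-- The Tits cone `𝒯 = {mδ : m ∈ ℤ} ∪ {μ + mδ + lΛ₀ : l > 0}`. -/
def Tits (P : Type) [AddCommGroup P] : Set (P × ℤ × ℤ) :=
  {ζ | (ζ.1 = 0 ∧ ζ.2.2 = 0) ∨ 0 < ζ.2.2}

/-- Positivity of a double affine root `α = α̃ + jπ` encoded as `(ν, r, j)`
(with `α̃ = ν + rδ`): positive iff (`α̃ > 0` and `j ≥ 0`) or (`α̃ < 0` and `j > 0`). -/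
def dPos {P : Type} [AddCommGroup P] (finPos : Set P) (a : P × ℤ × ℤ) : Prop :=
  (aPos finPos (a.1, a.2.1) ∧ 0 ≤ a.2.2) ∨ (aPos finPos (-a.1, -a.2.1) ∧ 0 < a.2.2)

variable {P G : Type} [AddCommGroup P] [Group G]

/-- Multiplication in the group `X ⋊ W_aff`:
`(X^ζ g)(X^η h) = X^{ζ + gη} (gh)`, where `xact` is the action of `W_aff` on `X`. -/
def dwmul (xact : G → P × ℤ × ℤ → P × ℤ × ℤ) (x y : (P × ℤ × ℤ) × G) :
    (P × ℤ × ℤ) × G :=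
  (x.1 + xact x.2 y.1, x.2 * y.2)

/-- Inversion in the group `X ⋊ W_aff`: `(X^ζ g)⁻¹ = X^{-g⁻¹ζ} g⁻¹`. -/
def dwinv (xact : G → P × ℤ × ℤ → P × ℤ × ℤ) (x : (P × ℤ × ℤ) × G) :
    (P × ℤ × ℤ) × G :=
  (-(xact x.2⁻¹ x.1), x.2⁻¹)

/-- Action of `X^ζ g ∈ X ⋊ W_aff` on double affine roots:
`X^ζ g (α̃ + jπ) = g(α̃) + (j - ⟨ζ, g(α̃)⟩)π`, where `ract` is the action of
`W_aff` on affine roots. -/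
def dact (pair : P → P → ℤ) (ract : G → P × ℤ → P × ℤ)
    (x : (P × ℤ × ℤ) × G) (a : P × ℤ × ℤ) : P × ℤ × ℤ :=
  ((ract x.2 (a.1, a.2.1)).1, (ract x.2 (a.1, a.2.1)).2,
    a.2.2 - xpair pair x.1 (ract x.2 (a.1, a.2.1)))

/-- The reflection `s_α = X^{-j(ν + rδ)} s_{ν + rδ} ∈ X ⋊ W_aff` associated to the
double affine root `α = ν + rδ + jπ`. -/
def dref (saff : P × ℤ → G) (a : P × ℤ × ℤ) : (P × ℤ × ℤ) × G :=
  ((-a.2.2 • a.1, -(a.2.2 * a.2.1), 0), saff (a.1, a.2.1))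

/-- All the data of the double affine setting together with the structural facts
that hold in it (context facts; `Φ_fin` irreducible and simply laced, normalized
pairing, Coxeter facts for `W_aff`, etc.). -/
structure Ctx (P G : Type) [AddCommGroup P] [Group G] where
  /-- the normalized pairing on the finite weight lattice -/
  pair : P → P → ℤ
  /-- the set of finite roots `Φ_fin` -/
  Φfin : Set P
  /-- the set of positive finite roots -/
  finPos : Set P
  /-- the number of finite simple roots (the affine simple roots are `α_0, …, α_n`) -/
  n : ℕ
  /-- the affine simple roots `α_0, …, α_n` -/
  simple : Fin (n + 1) → P × ℤ
  /-- the action of `W_aff` on affine roots -/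
  ract : G → P × ℤ → P × ℤ
  /-- the action of `W_aff` on the affine weight lattice `X` -/
  xact : G → P × ℤ × ℤ → P × ℤ × ℤ
  /-- the reflection `s_{α̃} ∈ W_aff` of an affine root `α̃` -/
  saff : P × ℤ → G
  /-- the translation `Y^λ ∈ W_aff` -/
  Ytr : P → G
  /-- the linear functional `⟨·, 2ρ⟩`, `ρ` the sum of the affine fundamental weights;
  an affine root `ν + rδ` is paired as the weight `(ν, r, 0)` -/
  rho2 : P × ℤ × ℤ → ℤ
  /-- `ζ ↦ ζ₊`, the dominant representative of the `W_aff`-orbit of `ζ` (for `ζ ∈ 𝒯`) -/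
  domRep : P × ℤ × ℤ → P × ℤ × ℤ
  pair_add_left : ∀ μ ν γ, pair (μ + ν) γ = pair μ γ + pair ν γ
  pair_add_right : ∀ μ ν γ, pair μ (ν + γ) = pair μ ν + pair μ γ
  pair_symm : ∀ μ ν, pair μ ν = pair ν μ
  pair_norm : ∀ ν ∈ Φfin, pair ν ν = 2
  pair_bound : ∀ ν ∈ Φfin, ∀ γ ∈ Φfin, pair ν γ ≤ 2
  pair_two_eq : ∀ ν ∈ Φfin, ∀ γ ∈ Φfin, pair ν γ = 2 → ν = γ
  root_neg : ∀ ν ∈ Φfin, -ν ∈ Φfin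
  pos_trichotomy : ∀ ν ∈ Φfin, (ν ∈ finPos ↔ ¬(-ν ∈ finPos))
  simple_root : ∀ i, (simple i).1 ∈ Φfin
  simple_pos : ∀ i, aPos finPos (simple i)
  ract_one : ∀ a, ract 1 a = a
  ract_mul : ∀ g h a, ract (g * h) a = ract g (ract h a)
  ract_neg : ∀ g a, ract g (-a) = -(ract g a)
  ract_root : ∀ g (a : P × ℤ), a.1 ∈ Φfin → (ract g a).1 ∈ Φfin
  xact_one : ∀ ζ, xact 1 ζ = ζ
  xact_mul : ∀ g h ζ, xact (g * h) ζ = xact g (xact h ζ)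
  xact_add : ∀ g ζ η, xact g (ζ + η) = xact g ζ + xact g η
  xact_level : ∀ g ζ, (xact g ζ).2.2 = ζ.2.2
  xact_pair : ∀ g ζ a, xpair pair (xact g ζ) (ract g a) = xpair pair ζ a
  saff_act : ∀ (ν : P) (r : ℤ) (γ : P) (p : ℤ),
    ract (saff (ν, r)) (γ, p) = (γ - pair ν γ • ν, p - r * pair ν γ)
  saff_invol : ∀ a : P × ℤ, saff a * saff a = 1
  saff_neg : ∀ a : P × ℤ, saff (-a) = saff a
  Ytr_act : ∀ (lam ν : P) (r : ℤ), ract (Ytr lam) (ν, r) = (ν, r - pair lam ν)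
  decomp : ∀ g : G, ∃ (lam : P) (wf : G), g = Ytr lam * wf ∧
    ∀ (ν : P) (r : ℤ), ract wf (ν, r) = ((ract wf (ν, 0)).1, r)
  invFin : ∀ g : G,
    {a : P × ℤ | a.1 ∈ Φfin ∧ aPos finPos a ∧ aPos finPos (-(ract g a))}.Finite
  domRep_mem : ∀ ζ : P × ℤ × ℤ, ζ ∈ Tits P → ∃ g : G, xact g ζ = domRep ζ
  domRep_dom : ∀ ζ : P × ℤ × ℤ, ζ ∈ Tits P → ∀ i, 0 ≤ xpair pair (domRep ζ) (simple i)
  domRep_eq : ∀ ζ : P × ℤ × ℤ, ζ ∈ Tits P →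
    ∀ g : G, (∀ i, 0 ≤ xpair pair (xact g ζ) (simple i)) → xact g ζ = domRep ζ
  rho2_add : ∀ ζ η, rho2 (ζ + η) = rho2 ζ + rho2 η
  rho2_simple : ∀ i, rho2 ((simple i).1, (simple i).2, 0) = 2

/-- The inversion set `Inv(g) = {α̃ ∈ Φ_aff : α̃ > 0, g(α̃) < 0}`. -/
def InvA (C : Ctx P G) (g : G) : Set (P × ℤ) :=
  {a | a.1 ∈ C.Φfin ∧ aPos C.finPos a ∧ aPos C.finPos (-(C.ract g a))}

/-- The Coxeter length of `g ∈ W_aff`, via `ℓ(g) = |Inv(g)|`. -/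
noncomputable def alen (C : Ctx P G) (g : G) : ℤ := ((InvA C g).ncard : ℤ)

/-- `ζ ∈ X` is dominant: `⟨ζ, α_i⟩ ≥ 0` for all affine simple roots. -/
def dominant (C : Ctx P G) (ζ : P × ℤ × ℤ) : Prop :=
  ∀ i, 0 ≤ xpair C.pair ζ (C.simple i)

/-- `ζ ∈ X` is regular: `⟨ζ, α̃⟩ ≠ 0` for all affine roots `α̃`. -/
def regular (C : Ctx P G) (ζ : P × ℤ × ℤ) : Prop :=
  ∀ a : P × ℤ, a.1 ∈ C.Φfin → xpair C.pair ζ a ≠ 0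

/-- The length of `x = X^ζ w̃ ∈ W`:
`ℓ(x) = ⟨ζ₊, 2ρ⟩ + #{α̃ ∈ Inv(w̃⁻¹) : ⟨ζ, α̃⟩ ≤ 0} - #{α̃ ∈ Inv(w̃⁻¹) : ⟨ζ, α̃⟩ > 0}`. -/
noncomputable def dlen (C : Ctx P G) (x : (P × ℤ × ℤ) × G) : ℤ :=
  C.rho2 (C.domRep x.1)
    + ((InvA C x.2⁻¹ ∩ {a | xpair C.pair x.1 a ≤ 0}).ncard : ℤ)
    - ((InvA C x.2⁻¹ ∩ {a | 0 < xpair C.pair x.1 a}).ncard : ℤ)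

/-- One generating step of the double affine Bruhat order:
`bstep C x y` holds iff `x` has positive level and `y = s_α x` for some positive
double affine root `α` with `x⁻¹(α) < 0`. -/
def bstep (C : Ctx P G) (x y : (P × ℤ × ℤ) × G) : Prop :=
  0 < level x.1 ∧ ∃ a : P × ℤ × ℤ, a.1 ∈ C.Φfin ∧ dPos C.finPos a ∧
    dPos C.finPos (-(dact C.pair C.ract (dwinv C.xact x) a)) ∧
    y = dwmul C.xact (dref C.saff a) x

/-- `bge C x y` means `x ≥ y` in the double affine Bruhat order (the order generated
by the relations `s_α x < x`). -/
def bge (C : Ctx P G) (x y : (P × ℤ × ℤ) × G) : Prop :=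
  Relation.ReflTransGen (bstep C) x y

/-- `blt C y x` means `y < x` in the double affine Bruhat order. -/
def blt (C : Ctx P G) (y x : (P × ℤ × ℤ) × G) : Prop :=
  bge C x y ∧ y ≠ x

/-- `y` is a cocover of `x`: `y < x` and there is no `z` with `y < z < x`. -/
def cocover (C : Ctx P G) (y x : (P × ℤ × ℤ) × G) : Prop :=
  blt C y x ∧ ¬∃ z : (P × ℤ × ℤ) × G, blt C y z ∧ blt C z x

/-- A double affine root `b` "corresponds to a point of the lower graph of `x`
(corresponding to `fin b`)": `b > 0` and `x⁻¹(b) < 0`. -/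
def inGraph (C : Ctx P G) (x : (P × ℤ × ℤ) × G) (b : P × ℤ × ℤ) : Prop :=
  dPos C.finPos b ∧ dPos C.finPos (-(dact C.pair C.ract (dwinv C.xact x) b))

/-- The lower graph `Γ_{x,ν} = {(r,j) : ν + rδ + jπ > 0 and x⁻¹(ν + rδ + jπ) < 0}`. -/
def Gamma (C : Ctx P G) (x : (P × ℤ × ℤ) × G) (ν : P) : Set (ℤ × ℤ) :=
  {rj | inGraph C x (ν, rj.1, rj.2)}

/-- `a` is a corner of the lower graph `Γ_{x, fin(a)}`. -/
def IsCorner (C : Ctx P G) (x : (P × ℤ × ℤ) × G) (a : P × ℤ × ℤ) : Prop :=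
  inGraph C x a ∧
    ∀ b : P × ℤ × ℤ, b.1 = a.1 → b ≠ a → inGraph C x b →
      ¬ inGraph C x (-(dact C.pair C.ract (dref C.saff a) b))

/-- The length difference set
`L_{x,α} = {β ∈ Φ : β > 0, x⁻¹(β) < 0, s_α(β) < 0, x⁻¹ s_α(β) > 0}`. -/
def Ldiff (C : Ctx P G) (x : (P × ℤ × ℤ) × G) (a : P × ℤ × ℤ) :
    Set (P × ℤ × ℤ) :=
  {b | b.1 ∈ C.Φfin ∧ dPos C.finPos b ∧
    dPos C.finPos (-(dact C.pair C.ract (dwinv C.xact x) b)) ∧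
    dPos C.finPos (-(dact C.pair C.ract (dref C.saff a) b)) ∧
    dPos C.finPos (dact C.pair C.ract (dwinv C.xact x) (dact C.pair C.ract (dref C.saff a) b))}

section Helpers

variable {P G : Type} [AddCommGroup P] [Group G] (C : Ctx P G)

/-- The pairing as an additive hom in the left argument. -/
private def pairHomL (γ : P) : P →+ ℤ :=
  AddMonoidHom.mk' (fun μ => C.pair μ γ) (fun a b => C.pair_add_left a b γ)

/-- The pairing as an additive hom in the right argument. -/
private def pairHomR (μ : P) : P →+ ℤ :=
  AddMonoidHom.mk' (C.pair μ) (fun a b => C.pair_add_right μ a b)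

private lemma pair_neg_left (μ γ : P) : C.pair (-μ) γ = -C.pair μ γ := by
  simpa [pairHomL] using map_neg (pairHomL C γ) μ

private lemma pair_zsmul_left (n : ℤ) (μ γ : P) :
    C.pair (n • μ) γ = n * C.pair μ γ := by
  simpa [pairHomL, smul_eq_mul] using map_zsmul (pairHomL C γ) n μ

private lemma pair_sub_right (μ a b : P) :
    C.pair μ (a - b) = C.pair μ a - C.pair μ b := by
  simpa [pairHomR] using map_sub (pairHomR C μ) a b

private lemma pair_zsmul_right (n : ℤ) (μ γ : P) :
    C.pair μ (n • γ) = n * C.pair μ γ := by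
  simpa [pairHomR, smul_eq_mul] using map_zsmul (pairHomR C μ) n γ

private lemma xpair_neg (η : P × ℤ × ℤ) (a : P × ℤ) :
    xpair C.pair (-η) a = -xpair C.pair η a := by
  simp only [xpair, Prod.fst_neg, Prod.snd_neg, pair_neg_left]
  ring

private lemma dPos_neg_r {w : P} {p q : ℤ} (hp : p < 0) :
    dPos C.finPos (w, p, q) ↔ 1 ≤ q := by
  simp only [dPos, aPos]
  constructor
  · rintro (⟨(h | ⟨h, -⟩), hq⟩ | ⟨-, hq⟩) <;> omega
  · intro hq
    exact Or.inr ⟨Or.inl (by omega), by omega⟩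

private lemma dPos_pos_r {w : P} {p q : ℤ} (hp : 0 < p) :
    dPos C.finPos (w, p, q) ↔ 0 ≤ q := by
  simp only [dPos, aPos]
  constructor
  · rintro (⟨-, hq⟩ | ⟨(h | ⟨h, -⟩), hq⟩) <;> omega
  · intro hq
    exact Or.inl ⟨Or.inl hp, hq⟩

private lemma dPos_le {b : P × ℤ × ℤ} (h : dPos C.finPos b) : 0 ≤ b.2.2 := by
  rcases h with ⟨-, hq⟩ | ⟨-, hq⟩ <;> omega

end Helpers

/-- for fixed `x ∈ W` of positive level and `ν ∈ Φ_fin`, there are only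
finitely many positive double affine roots `α` with `fin(α) = ν` and `x⁻¹(α) < 0`
that are corners of the lower graph `Γ_{x,ν}`. -/
theorem statement5 {P G : Type} [AddCommGroup P] [Group G] (C : Ctx P G)
    (x : (P × ℤ × ℤ) × G) (hxW : x.1 ∈ Tits P) (hxl : 0 < level x.1)
    (ν : P) (hν : ν ∈ C.Φfin) :
    {a : P × ℤ × ℤ | a.1 = ν ∧ dPos C.finPos a ∧
        dPos C.finPos (-(dact C.pair C.ract (dwinv C.xact x) a)) ∧
        IsCorner C x a}.Finite := by
  classical
  -- Notation
  set mA : ℤ := C.pair x.1.1 ν with hmA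
  set l : ℤ := x.1.2.2 with hldef
  have hl : 1 ≤ l := hxl
  -- Decompose x.2⁻¹
  obtain ⟨lam, wf, hg, hwf⟩ := C.decomp x.2⁻¹
  set ν' : P := (C.ract wf (ν, 0)).1 with hν'def
  set c : ℤ := C.pair lam ν' with hcdef
  have hract : ∀ p : ℤ, C.ract x.2⁻¹ (ν, p) = (ν', p - c) := by
    intro p
    rw [hg, C.ract_mul, hwf ν p, C.Ytr_act]
  -- Action of x⁻¹ on double affine roots with finite part ν
  have hdact1 : ∀ p q : ℤ, dact C.pair C.ract (dwinv C.xact x) (ν, p, q)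
      = (ν', p - c, q + (mA + l * p)) := by
    intro p q
    have hx : xpair C.pair (C.xact x.2⁻¹ x.1) (ν', p - c) = mA + l * p := by
      rw [← hract p, C.xact_pair]
      simp [xpair, hmA, hldef]
    show ((C.ract x.2⁻¹ (ν, p)).1, (C.ract x.2⁻¹ (ν, p)).2,
        q - xpair C.pair (-(C.xact x.2⁻¹ x.1)) (C.ract x.2⁻¹ (ν, p))) = _
    rw [hract p, xpair_neg, hx]
    exact Prod.ext rfl (Prod.ext rfl (by ring))
  -- Action of the reflection s_a, a = (ν, r, j), on roots with finite part ν
  have hpairnn : C.pair ν ν = 2 := C.pair_norm ν hν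
  have hdact2 : ∀ r j p q : ℤ, -(dact C.pair C.ract (dref C.saff (ν, r, j)) (ν, p, q))
      = (ν, 2 * r - p, 2 * j - q) := by
    intro r j p q
    have hs : C.ract (C.saff (ν, r)) (ν, p) = (-ν, p - 2 * r) := by
      rw [C.saff_act, hpairnn]
      refine Prod.ext ?_ (by show p - r * 2 = p - 2 * r; ring)
      show ν - (2 : ℤ) • ν = -ν
      rw [two_zsmul]; abel
    have hkey : C.pair ((-j) • ν) (-ν) = 2 * j := by
      rw [pair_zsmul_left, show (-ν : P) = (-1 : ℤ) • ν by simp, pair_zsmul_right, hpairnn]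
      ring
    show -((C.ract (C.saff (ν, r)) (ν, p)).1, (C.ract (C.saff (ν, r)) (ν, p)).2,
        q - xpair C.pair ((-j) • ν, -(j * r), 0) (C.ract (C.saff (ν, r)) (ν, p))) = _
    rw [hs]
    simp only [xpair, hkey, Prod.neg_mk]
    exact Prod.ext (by simp) (Prod.ext (by ring) (by ring))
  -- Membership in the lower graph, exact form for very negative p
  have hmem : ∀ p q : ℤ, p < 0 → p < c →
      (inGraph C x (ν, p, q) ↔ 1 ≤ q ∧ q + (mA + l * p) ≤ 0) := by
    intro p q hp hpc
    have hneg : -((ν', p - c, q + (mA + l * p)) : P × ℤ × ℤ)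
        = (-ν', c - p, -(q + (mA + l * p))) := by
      simp only [Prod.neg_mk]
      exact Prod.ext rfl (Prod.ext (by ring) rfl)
    unfold inGraph
    rw [hdact1 p q, hneg, dPos_neg_r C hp, dPos_pos_r C (by omega : (0:ℤ) < c - p)]
    constructor <;> rintro ⟨h1, h2⟩ <;> exact ⟨h1, by linarith⟩
  -- Crude bounds valid for every p
  have hcrude : ∀ p q : ℤ, inGraph C x (ν, p, q) → 0 ≤ q ∧ q + (mA + l * p) ≤ 0 := by
    intro p q ⟨h1, h2⟩
    have hb1 : (0:ℤ) ≤ q := dPos_le C h1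
    rw [hdact1 p q] at h2
    have hb2 : (0:ℤ) ≤ -(q + (mA + l * p)) := dPos_le C h2
    exact ⟨hb1, by linarith⟩
  set R0 : ℤ := min (min c 0) (-mA) - 2 with hR0def
  -- No corners with very negative r
  have hnc : ∀ r j : ℤ, r ≤ R0 → ¬ IsCorner C x (ν, r, j) := by
    rintro r j hr ⟨hin, hcor⟩
    obtain ⟨hj1, hjT⟩ := (hmem r j (by omega) (by omega)).1 hin
    have hr3 : r + 1 ≤ -mA - 1 := by omega
    have hprod : 0 ≤ (l - 1) * (-(r + 1)) :=
      mul_nonneg (by omega) (by omega)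
    have hk : mA + l * (r + 1) ≤ -1 := by nlinarith
    by_cases hc1 : j ≤ 1
    · -- j = 1 : use β = (ν, r-1, 1), reflected to (ν, r+1, 1)
      have hj : j = 1 := by omega
      have hb : inGraph C x (ν, r - 1, 1) := by
        rw [hmem _ _ (by omega) (by omega)]
        refine ⟨le_refl 1, by nlinarith⟩
      have hb' : inGraph C x (ν, r + 1, 1) := by
        rw [hmem _ _ (by omega) (by omega)]
        exact ⟨le_refl 1, by linarith⟩
      refine hcor (ν, r - 1, 1) rfl ?_ hb ?_
      · simp only [ne_eq, Prod.mk.injEq, not_and]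
        intro _ h; omega
      · rw [hdact2, show 2 * r - (r - 1) = r + 1 by ring, show 2 * j - 1 = 1 by omega]
        exact hb'
    · by_cases hc2 : j + 1 + (mA + l * r) ≤ 0
      · -- interior: β = (ν, r, j-1), reflected to (ν, r, j+1)
        have hb : inGraph C x (ν, r, j - 1) := by
          rw [hmem _ _ (by omega) (by omega)]
          exact ⟨by omega, by linarith⟩
        have hb' : inGraph C x (ν, r, j + 1) := by
          rw [hmem _ _ (by omega) (by omega)]
          exact ⟨by omega, by linarith⟩
        refine hcor (ν, r, j - 1) rfl ?_ hb ?_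
        · simp only [ne_eq, Prod.mk.injEq, not_and]
          intro _ _; omega
        · rw [hdact2, show 2 * r - r = r by ring, show 2 * j - (j - 1) = j + 1 by ring]
          exact hb'
      · -- top: j + mA + l r = 0; β = (ν, r+1, j-l), reflected to (ν, r-1, j+l)
        have hT : j + (mA + l * r) = 0 := by
          push_neg at hc2; linarith
        have hb : inGraph C x (ν, r + 1, j - l) := by
          rw [hmem _ _ (by omega) (by omega)]
          constructor
          · nlinarith
          · nlinarith
        have hb' : inGraph C x (ν, r - 1, j + l) := by
          rw [hmem _ _ (by omega) (by omega)]
          constructor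
          · omega
          · nlinarith
        refine hcor (ν, r + 1, j - l) rfl ?_ hb ?_
        · simp only [ne_eq, Prod.mk.injEq, not_and]
          intro h _; omega
        · rw [hdact2, show 2 * r - (r + 1) = r - 1 by ring,
            show 2 * j - (j - l) = j + l by ring]
          exact hb'
  -- Wrap-up: the corner set is contained in a finite box
  have hsub : {a : P × ℤ × ℤ | a.1 = ν ∧ dPos C.finPos a ∧
        dPos C.finPos (-(dact C.pair C.ract (dwinv C.xact x) a)) ∧
        IsCorner C x a}
      ⊆ (fun rj : ℤ × ℤ => ((ν, rj.1, rj.2) : P × ℤ × ℤ)) ''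
        (Set.Icc (R0 + 1) (max 0 (-mA)) ×ˢ Set.Icc 0 (-mA - l * (R0 + 1))) := by
    rintro ⟨w, r, j⟩ ⟨rfl, h2, h3, h4⟩
    have hcr := hcrude r j ⟨h2, h3⟩
    have hrR : R0 + 1 ≤ r := by
      by_contra h
      exact hnc r j (by omega) h4
    have hru : r ≤ max 0 (-mA) := by
      rcases le_or_gt r 0 with h | h
      · exact h.trans (le_max_left _ _)
      · have h1 : r ≤ l * r := le_mul_of_one_le_left h.le hl
        have h2' : l * r ≤ -mA := by linarith [hcr.1, hcr.2]
        exact (h1.trans h2').trans (le_max_right _ _)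
    have hjU : j ≤ -mA - l * (R0 + 1) := by
      have h1 : l * (R0 + 1) ≤ l * r :=
        mul_le_mul_of_nonneg_left hrR (by omega)
      linarith [hcr.2]
    exact ⟨(r, j), ⟨⟨hrR, hru⟩, hcr.1, hjU⟩, rfl⟩
  exact (((Set.finite_Icc _ _).prod (Set.finite_Icc _ _)).image _).subset hsub

end DoubleAffineBruhat
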